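/- Every finite group of order 24 having exactly five conjugacy classes is isomorphic to the symmetric group S₄ of all permutations of a four-element set. -/

import Mathlib

open Subgroup Pointwise

section Aux

variable {H : Type*} [Group H] [Finite H]

/-- `Equiv.permCongr` as a `MulEquiv`. -/
def permMulEquiv {α β : Type*} (e : α ≃ β) : Equiv.Perm α ≃* Equiv.Perm β :=
  { e.permCongr with map_mul' := fun p q => Equiv.ext fun x => by simp [Equiv.permCongr_apply] }

/-- Orbit-stabilizer for conjugation: the size of a conjugacy class times the order of the
centralizer equals the order of the group. -/
lemma class_card_mul_centralizer_card (g : H) :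
    Nat.card (ConjClasses.mk g).carrier *
      Nat.card (Subgroup.centralizer ({g} : Set H)) = Nat.card H := by
  classical
  cases nonempty_fintype H
  have hstab : Nat.card (Subgroup.centralizer ({g} : Set H))
      = Nat.card (MulAction.stabilizer (ConjAct H) g) := by
    rw [Subgroup.centralizer_eq_comap_stabilizer]
    exact Nat.card_congr (ConjAct.toConjAct.toEquiv.subtypeEquiv fun a => Iff.rfl)
  have horb : Nat.card (ConjClasses.mk g).carrier = Nat.card (MulAction.orbit (ConjAct H) g) := by
    rw [← ConjAct.orbit_eq_carrier_conjClasses]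
  rw [hstab, horb]
  simp only [Nat.card_eq_fintype_card]
  rw [MulAction.card_orbit_mul_card_stabilizer_eq_card_group]
  exact Fintype.card_congr ConjAct.toConjAct.toEquiv.symm

/-- The centralizer of a noncentral element has order at least twice the order of the center. -/
lemma two_mul_card_center_le_card_centralizer {g : H} (hg : g ∉ Subgroup.center H) :
    2 * Nat.card (Subgroup.center H) ≤ Nat.card (Subgroup.centralizer ({g} : Set H)) := by
  have hle : Subgroup.center H ≤ Subgroup.centralizer {g} := Subgroup.center_le_centralizer {g}
  obtain ⟨m, hm⟩ := Subgroup.card_dvd_of_le hle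
  have hzpos : 0 < Nat.card (Subgroup.center H) := Nat.card_pos
  have hCpos : 0 < Nat.card (Subgroup.centralizer ({g} : Set H)) := Nat.card_pos
  have hne : Nat.card (Subgroup.centralizer ({g} : Set H)) ≠ Nat.card (Subgroup.center H) := by
    intro h
    have : Subgroup.center H = Subgroup.centralizer {g} :=
      Subgroup.eq_of_le_of_card_ge hle (le_of_eq h)
    apply hg
    rw [this]
    exact Subgroup.mem_centralizer_iff.mpr (by simp)
  have hm2 : 2 ≤ m := by
    rcases Nat.lt_or_ge m 2 with h | h
    · interval_cases m <;> omega
    · exact h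
  calc 2 * Nat.card (Subgroup.center H) ≤ Nat.card (Subgroup.center H) * m := by nlinarith
    _ = _ := hm.symm

/-- Key counting bound coming from the class equation: if every noncentral conjugacy class
has size at most `m`, then `|H| ≤ |Z(H)| + (k - |Z(H)|) * m` where `k` is the number of
conjugacy classes. -/
lemma card_le_center_add_classes_mul (m : ℕ)
    (hm : ∀ g : H, g ∉ Subgroup.center H → Nat.card (ConjClasses.mk g).carrier ≤ m) :
    Nat.card H ≤ Nat.card (Subgroup.center H)
      + (Nat.card (ConjClasses H) - Nat.card (Subgroup.center H)) * m := by
  classical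
  cases nonempty_fintype H
  have hsum : ∑ c : ConjClasses H, c.carrier.toFinset.card = Fintype.card H :=
    sum_conjClasses_card_eq_card H
  set p : ConjClasses H → Prop := fun c => c.carrier.Nontrivial with hp
  have hcompl : ((ConjClasses.noncenter H)ᶜ).toFinset
      = Finset.univ.filter (fun c => ¬ p c) := by
    ext c
    simp [ConjClasses.mem_noncenter, p]
  -- number of central (singleton) classes
  have hz : (Finset.univ.filter (fun c : ConjClasses H => ¬ p c)).card
      = Nat.card (Subgroup.center H) := by
    rw [← hcompl, Set.toFinset_card, ← Nat.card_eq_fintype_card]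
    exact (Nat.card_congr ((ConjClasses.mk_bijOn H).equiv _)).symm
  -- singleton classes have size one
  have h1 : ∀ c ∈ Finset.univ.filter (fun c : ConjClasses H => ¬ p c),
      c.carrier.toFinset.card = 1 := by
    intro c hc
    rw [Finset.mem_filter] at hc
    obtain ⟨g, rfl⟩ := c.exists_rep
    have hsub : (ConjClasses.mk g).carrier.Subsingleton :=
      Set.not_nontrivial_iff.mp hc.2
    have hsing : (ConjClasses.mk g).carrier = {g} :=
      hsub.eq_singleton_of_mem ConjClasses.mem_carrier_mk
    have : (ConjClasses.mk g).carrier.toFinset = {g} := by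
      ext y
      simp [Set.mem_toFinset, hsing]
    rw [this, Finset.card_singleton]
  -- noncentral classes are bounded by m
  have h2 : ∀ c ∈ Finset.univ.filter (fun c : ConjClasses H => p c),
      c.carrier.toFinset.card ≤ m := by
    intro c hc
    rw [Finset.mem_filter] at hc
    obtain ⟨g, rfl⟩ := c.exists_rep
    have hgc : g ∉ Subgroup.center H := by
      intro hg
      have := (ConjClasses.mk_bijOn H).mapsTo hg
      simp only [Set.mem_compl_iff, ConjClasses.mem_noncenter] at this
      exact this hc.2
    have := hm g hgc
    rw [Set.toFinset_card, ← Nat.card_eq_fintype_card]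
    exact this
  have hsplit : (Finset.univ.filter (fun c : ConjClasses H => p c)).card
      + (Finset.univ.filter (fun c : ConjClasses H => ¬ p c)).card
      = (Finset.univ : Finset (ConjClasses H)).card :=
    Finset.card_filter_add_card_filter_not p
  have hsum1 : ∑ c ∈ Finset.univ.filter (fun c : ConjClasses H => ¬ p c),
      c.carrier.toFinset.card = (Finset.univ.filter (fun c : ConjClasses H => ¬ p c)).card :=
    Finset.sum_congr rfl h1 |>.trans (by simp)
  have hk : (Finset.univ : Finset (ConjClasses H)).card = Nat.card (ConjClasses H) := by
    rw [Nat.card_eq_fintype_card]; rfl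
  have hScard : (Finset.univ.filter (fun c : ConjClasses H => p c)).card
      = Nat.card (ConjClasses H) - Nat.card (Subgroup.center H) := by
    omega
  have hsum2 : ∑ c ∈ Finset.univ.filter (fun c : ConjClasses H => p c),
      c.carrier.toFinset.card ≤ (Finset.univ.filter (fun c : ConjClasses H => p c)).card * m :=
    Finset.sum_le_card_nsmul _ _ m h2
  rw [hScard] at hsum2
  have htot : ∑ c ∈ Finset.univ.filter (fun c : ConjClasses H => p c), c.carrier.toFinset.card
      + ∑ c ∈ Finset.univ.filter (fun c : ConjClasses H => ¬ p c), c.carrier.toFinset.card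
      = Fintype.card H := by
    rw [← hsum]
    exact (Finset.sum_filter_add_sum_filter_not _ _ _)
  have hH : Nat.card H = Fintype.card H := Nat.card_eq_fintype_card
  omega

end Aux

/-- Every group of order 8 has at least five conjugacy classes. -/
lemma five_le_card_conjClasses_of_card_eight (H : Type*) [Group H] [Finite H]
    (h8 : Nat.card H = 8) : 5 ≤ Nat.card (ConjClasses H) := by
  classical
  by_cases hc : ∀ a b : H, a * b = b * a
  · -- abelian: as many classes as elements
    have hinj : Function.Injective (ConjClasses.mk (α := H)) := by
      intro a b hab
      obtain ⟨c, hc'⟩ := isConj_iff.mp (ConjClasses.mk_eq_mk_iff_isConj.mp hab)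
      rw [← hc', hc c a, mul_assoc, mul_inv_cancel, mul_one]
    have := Nat.card_congr (Equiv.ofBijective _ ⟨hinj, ConjClasses.mk_surjective⟩)
    omega
  · push_neg at hc
    obtain ⟨a, b, hab⟩ := hc
    have hnt : Nontrivial H := by
      rcases subsingleton_or_nontrivial H with h | h
      · exact absurd (Subsingleton.elim (a * b) (b * a)) hab
      · exact h
    have hp : IsPGroup 2 H := IsPGroup.of_card (show Nat.card H = 2 ^ 3 by rw [h8]; norm_num)
    have : Fact (Nat.Prime 2) := ⟨Nat.prime_two⟩
    have hznt : Nontrivial (Subgroup.center H) := IsPGroup.center_nontrivial hp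
    obtain ⟨z, hzeq⟩ : ∃ z, Nat.card (Subgroup.center H) = z := ⟨_, rfl⟩
    have hz2 : 2 ≤ z := hzeq ▸ Finite.one_lt_card
    have hzdvd : z ∣ 8 := by
      rw [← hzeq, ← h8]
      exact Subgroup.card_subgroup_dvd_card _
    have hzne8 : z ≠ 8 := by
      intro h
      have : Subgroup.center H = ⊤ := Subgroup.eq_top_of_card_eq _ (by omega)
      exact hab ((Subgroup.mem_center_iff.mp (this ▸ Subgroup.mem_top b)) a)
    have hzne4 : z ≠ 4 := by
      intro h4
      -- quotient by center has order 2, hence cyclic, hence H abelian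
      have hq : Nat.card (H ⧸ Subgroup.center H) = 2 := by
        have := Subgroup.card_eq_card_quotient_mul_card_subgroup (Subgroup.center H)
        rw [h8, hzeq, h4] at this
        omega
      have : IsCyclic (H ⧸ Subgroup.center H) := isCyclic_of_prime_card hq
      have hcomm := commutative_of_cyclic_center_quotient (QuotientGroup.mk' (Subgroup.center H))
        (by rw [QuotientGroup.ker_mk'])
      exact hab (hcomm a b)
    have hz : z = 2 := by
      have hle : z ≤ 8 := Nat.le_of_dvd (by norm_num) hzdvd
      interval_cases z <;> omega
    have key : ∀ g : H, g ∉ Subgroup.center H → Nat.card (ConjClasses.mk g).carrier ≤ 2 := by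
      intro g hg
      have h1 := class_card_mul_centralizer_card g
      have h2 := two_mul_card_center_le_card_centralizer hg
      rw [hzeq, hz] at h2
      norm_num at h2
      have h3 := Nat.mul_le_mul_left (Nat.card (ConjClasses.mk g).carrier) h2
      rw [h8] at h1
      omega
    have hbound := card_le_center_add_classes_mul (H := H) 2 key
    rw [hzeq, hz, h8] at hbound
    omega

section Main

variable (G : Type*) [Group G] [Finite G]

/-- A group of order 24 with five conjugacy classes has trivial center. -/
lemma center_trivial_of_card24 (hcard : Nat.card G = 24)
    (hconj : Nat.card (ConjClasses G) = 5) :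
    Nat.card (Subgroup.center G) = 1 := by
  classical
  obtain ⟨z, hzeq⟩ : ∃ z, Nat.card (Subgroup.center G) = z := ⟨_, rfl⟩
  have hzdvd : z ∣ 24 := by
    rw [← hzeq, ← hcard]
    exact Subgroup.card_subgroup_dvd_card _
  have hzpos : 0 < z := hzeq ▸ Nat.card_pos
  -- the center injects into the set of conjugacy classes
  have hzle : z ≤ 5 := by
    have h1 := Nat.card_congr ((ConjClasses.mk_bijOn G).equiv ConjClasses.mk)
    have hle : Nat.card ((ConjClasses.noncenter G)ᶜ : Set (ConjClasses G))
        ≤ Nat.card (ConjClasses G) :=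
      Nat.card_le_card_of_injective _ Subtype.val_injective
    have hcoe : Nat.card ((Subgroup.center G : Set G)) = Nat.card (Subgroup.center G) := rfl
    omega
  rw [hzeq]
  by_contra hne
  -- helper: per-class bound for concrete center orders
  have key : ∀ m : ℕ, 24 ≤ 2 * z * m →
      ∀ g : G, g ∉ Subgroup.center G → Nat.card (ConjClasses.mk g).carrier ≤ m := by
    intro m hm g hg
    have h1 := class_card_mul_centralizer_card g
    have h2 := two_mul_card_center_le_card_centralizer hg
    rw [hzeq] at h2
    have h3 := Nat.mul_le_mul_left (Nat.card (ConjClasses.mk g).carrier) h2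
    rw [hcard] at h1
    -- size * (2z) ≤ size * C = 24 and 24 ≤ 2z * m gives size ≤ m
    by_contra hlt
    push_neg at hlt
    have h4 : Nat.card (ConjClasses.mk g).carrier * (2 * z) ≤ 24 := by omega
    have h5 : (m + 1) * (2 * z) ≤ Nat.card (ConjClasses.mk g).carrier * (2 * z) :=
      Nat.mul_le_mul_right _ hlt
    nlinarith
  have hz' : z = 2 ∨ z = 3 ∨ z = 4 := by
    have hle : z ≤ 24 := Nat.le_of_dvd (by norm_num) hzdvd
    interval_cases z <;> omega
  rcases hz' with h | h | h
  · have hb := card_le_center_add_classes_mul (H := G) 6 (key 6 (by rw [h]))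
    rw [hzeq, hcard, hconj, h] at hb
    omega
  · have hb := card_le_center_add_classes_mul (H := G) 4 (key 4 (by rw [h]))
    rw [hzeq, hcard, hconj, h] at hb
    omega
  · have hb := card_le_center_add_classes_mul (H := G) 3 (key 3 (by rw [h]))
    rw [hzeq, hcard, hconj, h] at hb
    omega

/-- A group of order 24 with five conjugacy classes has no normal subgroup of order 3. -/
lemma no_normal_card_three_of_card24 (hcard : Nat.card G = 24)
    (hconj : Nat.card (ConjClasses G) = 5) (P : Subgroup G) [hP : P.Normal]
    (h3 : Nat.card P = 3) : False := by
  classical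
  have hq8 : Nat.card (G ⧸ P) = 8 := by
    have := Subgroup.card_eq_card_quotient_mul_card_subgroup P
    rw [hcard, h3] at this
    omega
  have h5 := five_le_card_conjClasses_of_card_eight (G ⧸ P) hq8
  have hsurj : Function.Surjective (ConjClasses.map (QuotientGroup.mk' P)) :=
    ConjClasses.map_surjective (QuotientGroup.mk'_surjective P)
  have hle := Nat.card_le_card_of_surjective _ hsurj
  rw [hconj] at hle
  have hcards : Nat.card (ConjClasses G) = Nat.card (ConjClasses (G ⧸ P)) := by omega
  have hbij : Function.Bijective (ConjClasses.map (QuotientGroup.mk' P)) :=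
    (Nat.bijective_iff_surjective_and_card _).mpr ⟨hsurj, hcards⟩
  -- but the map is not injective: a nontrivial element of P maps to the class of 1
  have : Nontrivial P := Finite.one_lt_card_iff_nontrivial.mp (by omega)
  obtain ⟨x, hx⟩ := exists_ne (1 : P)
  have hx1 : (x : G) ≠ 1 := by simpa using hx
  have hmk : (QuotientGroup.mk' P) (x : G) = 1 := by
    rw [QuotientGroup.mk'_apply, QuotientGroup.eq_one_iff]
    exact x.2
  have heq : ConjClasses.map (QuotientGroup.mk' P) (ConjClasses.mk (x : G))
      = ConjClasses.map (QuotientGroup.mk' P) (ConjClasses.mk (1 : G)) := by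
    show ConjClasses.mk ((QuotientGroup.mk' P) (x : G))
      = ConjClasses.mk ((QuotientGroup.mk' P) (1 : G))
    rw [hmk, map_one]
  have hconj1 : IsConj (x : G) (1 : G) :=
    ConjClasses.mk_eq_mk_iff_isConj.mp (hbij.1 heq)
  obtain ⟨c, hc⟩ := isConj_iff.mp hconj1
  apply hx1
  have h2 : (c : G) * (x : G) = c * 1 := by
    have := congrArg (· * (c : G)) hc
    simpa [mul_assoc] using this
  exact mul_left_cancel h2

end Main

/-- Every finite group of order 24 having exactly five conjugacy classes is isomorphic
to the symmetric group `S₄` of all permutations of a four-element set. -/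
theorem group_card_24_five_conjClasses_iso_symmGroup4
    (G : Type*) [Group G] [Finite G]
    (hcard : Nat.card G = 24)
    (hconj : Nat.card (ConjClasses G) = 5) :
    Nonempty (G ≃* Equiv.Perm (Fin 4)) := by
  classical
  have hp3 : Fact (Nat.Prime 3) := ⟨by norm_num⟩
  -- every Sylow 3-subgroup has order 3
  have hfact : (Nat.card G).factorization 3 = 1 := by
    rw [hcard]
    have h24 : (24 : ℕ) = 2 ^ 3 * 3 ^ 1 := by norm_num
    rw [h24, Nat.factorization_mul (by norm_num) (by norm_num),
      Nat.Prime.factorization_pow (by norm_num), Nat.Prime.factorization_pow (by norm_num)]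
    simp [Finsupp.single_apply]
  have hcardP : ∀ P : Sylow 3 G, Nat.card (P : Subgroup G) = 3 := by
    intro P
    rw [P.card_eq_multiplicity, hfact, pow_one]
  obtain ⟨P₀⟩ : Nonempty (Sylow 3 G) := inferInstance
  -- the number of Sylow 3-subgroups is 4
  have hn : Nat.card (Sylow 3 G) = 4 := by
    have hmod : Nat.card (Sylow 3 G) % 3 = 1 % 3 := card_sylow_modEq_one 3 G
    have hdvd : Nat.card (Sylow 3 G) ∣ (P₀ : Subgroup G).index := Sylow.card_dvd_index P₀
    have hindex : (P₀ : Subgroup G).index = 8 := by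
      have := Subgroup.card_mul_index (P₀ : Subgroup G)
      rw [hcardP P₀, hcard] at this
      omega
    rw [hindex] at hdvd
    have hne1 : Nat.card (Sylow 3 G) ≠ 1 := by
      intro h1
      have hsub : Subsingleton (Sylow 3 G) := (Nat.card_eq_one_iff_unique.mp h1).1
      have hnorm : (P₀ : Subgroup G).Normal := by
        rw [← Subgroup.normalizer_eq_top_iff, eq_top_iff]
        intro g _
        exact Sylow.smul_eq_iff_mem_normalizer.mp (Subsingleton.elim _ _)
      exact @no_normal_card_three_of_card24 G _ _ hcard hconj (P₀ : Subgroup G) hnorm (hcardP P₀)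
    obtain ⟨n, hne⟩ : ∃ n, Nat.card (Sylow 3 G) = n := ⟨_, rfl⟩
    rw [hne] at hmod hdvd hne1 ⊢
    have hle : n ≤ 8 := Nat.le_of_dvd (by norm_num) hdvd
    interval_cases n <;> omega
  -- the action on the four Sylow 3-subgroups
  set φ := MulAction.toPermHom G (Sylow 3 G) with hφ
  have hfix : ∀ g ∈ φ.ker, ∀ P : Sylow 3 G, g • P = P := by
    intro g hg P
    have h1 : φ g = 1 := MonoidHom.mem_ker.mp hg
    calc g • P = φ g P := rfl
      _ = (1 : Equiv.Perm (Sylow 3 G)) P := by rw [h1]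
      _ = P := rfl
  have hKle : φ.ker ≤ Subgroup.normalizer (P₀ : Set G) := fun g hg =>
    Sylow.smul_eq_iff_mem_normalizer.mp (hfix g hg P₀)
  have hNcard : Nat.card (Subgroup.normalizer (P₀ : Set G)) = 6 := by
    have h1 : Nat.card (Sylow 3 G) = (Subgroup.normalizer (P₀ : Set G)).index :=
      Sylow.card_eq_index_normalizer P₀
    have h2 := Subgroup.card_mul_index (Subgroup.normalizer (P₀ : Set G))
    rw [hcard, ← h1, hn] at h2
    omega
  have hKdvd : Nat.card φ.ker ∣ 6 := hNcard ▸ Subgroup.card_dvd_of_le hKle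
  have hKcases : Nat.card φ.ker = 1 ∨ Nat.card φ.ker = 2 ∨ 3 ∣ Nat.card φ.ker := by
    obtain ⟨k, hk⟩ : ∃ k, Nat.card φ.ker = k := ⟨_, rfl⟩
    rw [hk] at hKdvd ⊢
    have hle : k ≤ 6 := Nat.le_of_dvd (by norm_num) hKdvd
    have hpos : 0 < k := hk ▸ Nat.card_pos
    interval_cases k <;> omega
  rcases hKcases with hK | hK | hK
  · -- trivial kernel: G embeds in the permutations of the four Sylow subgroups
    have hker : φ.ker = ⊥ := Subgroup.card_eq_one.mp hK
    have hinj : Function.Injective φ := (MonoidHom.ker_eq_bot_iff φ).mp hker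
    cases nonempty_fintype (Sylow 3 G)
    have hcards : Nat.card G = Nat.card (Equiv.Perm (Sylow 3 G)) := by
      rw [hcard, Nat.card_eq_fintype_card, Fintype.card_perm, ← Nat.card_eq_fintype_card, hn]
      norm_num [Nat.factorial]
    have hbij : Function.Bijective φ :=
      (Nat.bijective_iff_injective_and_card φ).mpr ⟨hinj, hcards⟩
    have e2 : Sylow 3 G ≃ Fin 4 :=
      Fintype.equivFinOfCardEq (by rw [← Nat.card_eq_fintype_card, hn])
    exact ⟨(MulEquiv.ofBijective φ hbij).trans (permMulEquiv e2)⟩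
  · -- kernel of order 2: it would be central, contradicting triviality of the center
    exfalso
    have hcen := center_trivial_of_card24 G hcard hconj
    have hKnt : Nontrivial φ.ker := Finite.one_lt_card_iff_nontrivial.mp (by omega)
    obtain ⟨y, hy⟩ := exists_ne (1 : φ.ker)
    have hy1 : (y : G) ≠ 1 := fun h => hy (Subtype.ext h)
    have hmem : ∀ w : G, ∀ hw : w ∈ φ.ker, w = 1 ∨ w = (y : G) := by
      intro w hw
      by_contra hcon
      push_neg at hcon
      cases nonempty_fintype φ.ker
      have hdist : ({1, y, ⟨w, hw⟩} : Finset φ.ker).card = 3 := by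
        rw [Finset.card_insert_of_notMem, Finset.card_insert_of_notMem,
          Finset.card_singleton]
        · simp only [Finset.mem_singleton]
          intro h
          exact hcon.2 (congrArg Subtype.val h).symm
        · simp only [Finset.mem_insert, Finset.mem_singleton]
          push_neg
          refine ⟨fun h => hy h.symm, fun h => hcon.1 (congrArg Subtype.val h).symm⟩
      have hle3 := Finset.card_le_univ ({1, y, ⟨w, hw⟩} : Finset φ.ker)
      rw [hdist] at hle3
      rw [← Nat.card_eq_fintype_card] at hle3
      omega
    have hcent : (y : G) ∈ Subgroup.center G := by
      rw [Subgroup.mem_center_iff]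
      intro g
      have hconjmem : g * (y : G) * g⁻¹ ∈ φ.ker :=
        (MonoidHom.normal_ker φ).conj_mem _ y.2 g
      rcases hmem _ hconjmem with h | h
      · exfalso
        apply hy1
        have h2 : g * (y : G) = g * 1 := by
          have := congrArg (· * g) h
          simpa [mul_assoc, mul_one] using this
        exact mul_left_cancel h2
      · have := congrArg (· * g) h
        simpa [mul_assoc] using this
    have : Nontrivial (Subgroup.center G) :=
      ⟨⟨⟨(y : G), hcent⟩, 1, fun h => hy1 (congrArg Subtype.val h)⟩⟩
    have := Finite.one_lt_card (α := Subgroup.center G)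
    omega
  · -- kernel of order divisible by 3: two distinct Sylow subgroups inside the kernel
    exfalso
    obtain ⟨x, hx⟩ := exists_prime_orderOf_dvd_card' (G := φ.ker) 3 hK
    have hxG : orderOf (x : G) = 3 := by rw [Subgroup.orderOf_coe, hx]
    have hzp : Nat.card (Subgroup.zpowers (x : G)) = 3 := by rw [Nat.card_zpowers, hxG]
    set Q : Sylow 3 G := Sylow.ofCard (Subgroup.zpowers ((x : φ.ker) : G))
      (by rw [hzp, hfact, pow_one]) with hQdef
    have hQcoe : (Q : Subgroup G) = Subgroup.zpowers ((x : φ.ker) : G) :=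
      Sylow.coe_ofCard _ _
    have hQle : (Q : Subgroup G) ≤ φ.ker := by
      rw [hQcoe]
      exact Subgroup.zpowers_le.mpr x.2
    have hnt : Nontrivial (Sylow 3 G) :=
      Finite.one_lt_card_iff_nontrivial.mp (by rw [hn]; norm_num)
    obtain ⟨R, hR⟩ := exists_ne Q
    obtain ⟨g, hg⟩ := MulAction.exists_smul_eq G Q R
    have hRle : (R : Subgroup G) ≤ φ.ker := by
      calc (R : Subgroup G) = MulAut.conj g • (Q : Subgroup G) := by
            rw [← hg]; exact Sylow.coe_subgroup_smul
        _ ≤ MulAut.conj g • φ.ker := Subgroup.pointwise_smul_le_pointwise_smul_iff.mpr hQle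
        _ = φ.ker := Subgroup.Normal.conj_smul_eq_self g _
    -- inside the kernel, the Sylow 3-subgroup is unique
    have hQK : Nat.card ((Q.subtype hQle : Sylow 3 φ.ker) : Subgroup φ.ker) = 3 := by
      rw [Sylow.coe_subtype]
      rw [Nat.card_congr (Subgroup.subgroupOfEquivOfLe hQle).toEquiv]
      rw [hQcoe, hzp]
    have hmodK : Nat.card (Sylow 3 φ.ker) % 3 = 1 % 3 := card_sylow_modEq_one 3 φ.ker
    have hdvdK : Nat.card (Sylow 3 φ.ker)
        ∣ ((Q.subtype hQle : Sylow 3 φ.ker) : Subgroup φ.ker).index :=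
      Sylow.card_dvd_index _
    have hidx : ((Q.subtype hQle : Sylow 3 φ.ker) : Subgroup φ.ker).index ∣ 2 := by
      have h2 := Subgroup.card_mul_index
        ((Q.subtype hQle : Sylow 3 φ.ker) : Subgroup φ.ker)
      rw [hQK] at h2
      obtain ⟨c, hc⟩ := hKdvd
      rw [← h2, mul_assoc] at hc
      exact ⟨c, by omega⟩
    have hnK : Nat.card (Sylow 3 φ.ker) = 1 := by
      have hle2 : Nat.card (Sylow 3 φ.ker) ∣ 2 := dvd_trans hdvdK hidx
      obtain ⟨k, hk⟩ : ∃ k, Nat.card (Sylow 3 φ.ker) = k := ⟨_, rfl⟩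
      rw [hk] at hmodK hle2 ⊢
      have hle : k ≤ 2 := Nat.le_of_dvd (by norm_num) hle2
      have hpos : 0 < k := hk ▸ Nat.card_pos
      interval_cases k <;> omega
    have hss : Subsingleton (Sylow 3 φ.ker) := (Nat.card_eq_one_iff_unique.mp hnK).1
    exact hR (Sylow.subtype_injective
      (Subsingleton.elim (R.subtype hRle) (Q.subtype hQle)))
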